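/- With notation as in the context, the cw-exact sequences δ(a,c,b) and δ(a,c′,b) are isomorphic if and only if there exist an automorphism (α₁, α₂) of the arrow a (isomorphisms α₁ of A₁ and α₂ of A₂ with α₂ ∘ a = a ∘ α₁) and an automorphism (β₁, β₂) of the arrow b (isomorphisms with β₂ ∘ b = b ∘ β₁) such that α₂ ∘ c − c′ ∘ β₁ lies in Htp(a,b), i.e., α₂ ∘ c − c′ ∘ β₁ = a ∘ s + t ∘ b for some s : B₁ → A₁ and t : B₂ → A₂. -/

import Mathlib

open CategoryTheory CategoryTheory.Limits

universe v u

variable {A : Type u} [Category.{v} A] [Preadditive A] [HasBinaryBiproducts A]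

/-- The morphism `A₁ ⊞ B₁ ⟶ A₂ ⊞ B₂` with matrix entries `a, c, 0, b`. -/
noncomputable def matMor {A₁ A₂ B₁ B₂ : A} (a : A₁ ⟶ A₂) (c : B₁ ⟶ A₂) (b : B₁ ⟶ B₂) :
    (A₁ ⊞ B₁ : A) ⟶ (A₂ ⊞ B₂ : A) :=
  biprod.desc (a ≫ biprod.inl) (c ≫ biprod.inl + b ≫ biprod.inr)

/-- The inclusion arrow morphism `(inl, inl) : a → M(a,c,b)` of the cw-exact sequence. -/
noncomputable def incMor {A₁ A₂ B₁ B₂ : A} (a : A₁ ⟶ A₂) (c : B₁ ⟶ A₂) (b : B₁ ⟶ B₂) :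
    Arrow.mk a ⟶ Arrow.mk (matMor a c b) :=
  Arrow.homMk (u := biprod.inl) (v := biprod.inl) (by simp [matMor])

/-- The projection arrow morphism `(pr₂, pr₂) : M(a,c,b) → b` of the cw-exact sequence. -/
noncomputable def prjMor {A₁ A₂ B₁ B₂ : A} (a : A₁ ⟶ A₂) (c : B₁ ⟶ A₂) (b : B₁ ⟶ B₂) :
    Arrow.mk (matMor a c b) ⟶ Arrow.mk b :=
  Arrow.homMk (u := biprod.snd) (v := biprod.snd)
    (by apply biprod.hom_ext' <;> simp [matMor])

/-- `Htp(a,b)`: the morphisms `B₁ ⟶ A₂` of the form `a ∘ s + t ∘ b`. -/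
def Htp {A₁ A₂ B₁ B₂ : A} (a : A₁ ⟶ A₂) (b : B₁ ⟶ B₂) (x : B₁ ⟶ A₂) : Prop :=
  ∃ (s : B₁ ⟶ A₁) (t : B₂ ⟶ A₂), x = s ≫ a + b ≫ t

/-- An isomorphism of cw-exact sequences `δ(a,c,b) ≅ δ(a,c′,b)`. -/
noncomputable def SeqIso {A₁ A₂ B₁ B₂ : A} (a : A₁ ⟶ A₂) (c c' : B₁ ⟶ A₂) (b : B₁ ⟶ B₂) :
    Prop :=
  ∃ (α : Arrow.mk a ≅ Arrow.mk a) (φ : Arrow.mk (matMor a c b) ≅ Arrow.mk (matMor a c' b))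
    (β : Arrow.mk b ≅ Arrow.mk b),
    incMor a c b ≫ φ.hom = α.hom ≫ incMor a c' b ∧
    prjMor a c b ≫ β.hom = φ.hom ≫ prjMor a c' b

/-- Upper-triangular matrix with iso diagonal entries is an iso. -/
noncomputable def triIso {X Y X' Y' : A} (p : X ≅ X') (q : Y ≅ Y') (r : Y ⟶ X') :
    (X ⊞ Y : A) ≅ (X' ⊞ Y' : A) where
  hom := biprod.desc (p.hom ≫ biprod.inl) (r ≫ biprod.inl + q.hom ≫ biprod.inr)
  inv := biprod.desc (p.inv ≫ biprod.inl)
    (-(q.inv ≫ r ≫ p.inv) ≫ biprod.inl + q.inv ≫ biprod.inr)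
  hom_inv_id := by
    apply biprod.hom_ext' <;>
      simp [Preadditive.add_comp, Preadditive.comp_add, Category.assoc]
  inv_hom_id := by
    apply biprod.hom_ext' <;>
      simp [Preadditive.add_comp, Preadditive.comp_add, Category.assoc]

lemma fwd_aux {A₁ A₂ B₁ B₂ : A} (a : A₁ ⟶ A₂) (c c' : B₁ ⟶ A₂) (b : B₁ ⟶ B₂)
    (α₂ : A₂ ⟶ A₂) (β₁ : B₁ ⟶ B₁)
    (φl : (A₁ ⊞ B₁ : A) ⟶ (A₁ ⊞ B₁ : A)) (φr : (A₂ ⊞ B₂ : A) ⟶ (A₂ ⊞ B₂ : A))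
    (hw : φl ≫ matMor a c' b = matMor a c b ≫ φr)
    (h1r : biprod.inl ≫ φr = α₂ ≫ biprod.inl)
    (h2l : biprod.snd ≫ β₁ = φl ≫ biprod.snd) :
    Htp a b (c ≫ α₂ - β₁ ≫ c') := by
  refine ⟨biprod.inr ≫ φl ≫ biprod.fst, -(biprod.inr ≫ φr ≫ biprod.fst), ?_⟩
  have key := congrArg (fun f => biprod.inr ≫ f ≫ biprod.fst) hw
  simp only [Category.assoc] at key
  have hL : matMor a c' b ≫ biprod.fst = biprod.fst ≫ a + biprod.snd ≫ c' := by
    apply biprod.hom_ext' <;> simp [matMor]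
  have hR : biprod.inr ≫ matMor a c b = c ≫ biprod.inl + b ≫ biprod.inr := by
    simp [matMor]
  rw [hL, reassoc_of% hR] at key
  simp only [Preadditive.comp_add, Preadditive.add_comp, Category.assoc, ← reassoc_of% h2l,
    reassoc_of% h1r] at key
  simp only [Category.assoc, biprod.inl_fst, Category.comp_id, biprod.inr_snd_assoc] at key
  simp only [Preadditive.comp_neg, Preadditive.neg_comp, Category.assoc]
  linear_combination (norm := abel) -key

lemma bwd_sq {A₁ A₂ B₁ B₂ : A} (a : A₁ ⟶ A₂) (c c' : B₁ ⟶ A₂) (b : B₁ ⟶ B₂)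
    (α₁ : A₁ ≅ A₁) (α₂ : A₂ ≅ A₂) (β₁ : B₁ ≅ B₁) (β₂ : B₂ ≅ B₂)
    (hα : a ≫ α₂.hom = α₁.hom ≫ a) (hβ : b ≫ β₂.hom = β₁.hom ≫ b)
    (s : B₁ ⟶ A₁) (t : B₂ ⟶ A₂) (hst : c ≫ α₂.hom - β₁.hom ≫ c' = s ≫ a + b ≫ t) :
    (triIso α₁ β₁ s).hom ≫ matMor a c' b = matMor a c b ≫ (triIso α₂ β₂ (-t)).hom := by
  apply biprod.hom_ext' <;> apply biprod.hom_ext <;>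
    simp only [triIso, matMor, Category.assoc, biprod.inl_desc_assoc, biprod.inr_desc_assoc,
      biprod.inl_desc, biprod.inr_desc, Preadditive.add_comp, Preadditive.comp_add,
      Preadditive.neg_comp, Preadditive.comp_neg, biprod.inl_fst, biprod.inl_snd,
      biprod.inr_fst, biprod.inr_snd, Category.comp_id, comp_zero, add_zero, zero_add, neg_zero]
  · exact hα.symm
  · linear_combination (norm := abel) -hst
  · exact hβ.symm

/-- **Statement 9.** The cw-exact sequences `δ(a,c,b)` and `δ(a,c′,b)` are isomorphic iff
there are automorphisms `(α₁, α₂)` of the arrow `a` and `(β₁, β₂)` of the arrow `b` with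
`α₂ ∘ c − c′ ∘ β₁ ∈ Htp(a,b)`. -/
theorem seqIso_iff_htp {A : Type u} [Category.{v} A] [Preadditive A] [HasBinaryBiproducts A]
    {A₁ A₂ B₁ B₂ : A} (a : A₁ ⟶ A₂) (c c' : B₁ ⟶ A₂) (b : B₁ ⟶ B₂) :
    SeqIso a c c' b ↔
      ∃ (α₁ : A₁ ≅ A₁) (α₂ : A₂ ≅ A₂) (β₁ : B₁ ≅ B₁) (β₂ : B₂ ≅ B₂),
        a ≫ α₂.hom = α₁.hom ≫ a ∧ b ≫ β₂.hom = β₁.hom ≫ b ∧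
        Htp a b (c ≫ α₂.hom - β₁.hom ≫ c') := by
  constructor
  · rintro ⟨α, φ, β, h1, h2⟩
    refine ⟨Arrow.leftFunc.mapIso α, Arrow.rightFunc.mapIso α,
      Arrow.leftFunc.mapIso β, Arrow.rightFunc.mapIso β, α.hom.w.symm, β.hom.w.symm, ?_⟩
    have h1r : biprod.inl ≫ φ.hom.right = α.hom.right ≫ biprod.inl := by
      have := congrArg Arrow.Hom.right h1; simpa [incMor] using this
    have h2l : biprod.snd ≫ β.hom.left = φ.hom.left ≫ biprod.snd := by
      have := congrArg Arrow.Hom.left h2; simpa [prjMor] using this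
    exact fwd_aux a c c' b α.hom.right β.hom.left φ.hom.left φ.hom.right φ.hom.w h1r h2l
  · rintro ⟨α₁, α₂, β₁, β₂, hα, hβ, s, t, hst⟩
    refine ⟨Arrow.isoMk α₁ α₂ hα.symm,
      Arrow.isoMk (triIso α₁ β₁ s) (triIso α₂ β₂ (-t))
        (bwd_sq a c c' b α₁ α₂ β₁ β₂ hα hβ s t hst),
      Arrow.isoMk β₁ β₂ hβ.symm, ?_, ?_⟩
    · ext : 1 <;> (dsimp [incMor, triIso]; simp)
    · ext : 1 <;> (dsimp [prjMor, triIso]; apply biprod.hom_ext' <;> simp)
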